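/- Let L^(n) denote the total number of chains in the chain decompositions of all nilpotent elements of IS_n. Then |IS_n| = L^(n+1)/(n+1), i.e., (n+1)*|IS_n| = L^(n+1). -/

import Mathlib

def IsPInj (n : ℕ) (f : Fin n → Option (Fin n)) : Prop :=
  ∀ a b c, f a = some c → f b = some c → a = b

instance (n : ℕ) : DecidablePred (IsPInj n) := fun _ =>
  inferInstanceAs (Decidable (∀ _ _ _, _ → _ → _))

/-- The symmetric inverse semigroup `IS_n`: partial injective maps on `{1,…,n}`. -/
def PInj (n : ℕ) := {f : Fin n → Option (Fin n) // IsPInj n f}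

instance (n : ℕ) : Fintype (PInj n) := Subtype.fintype _

/-- `iterMap n f k x` is `f^k(x)` as a partial map. -/
def iterMap (n : ℕ) (f : Fin n → Option (Fin n)) : ℕ → Fin n → Option (Fin n)
  | 0, x => some x
  | k + 1, x => (f x).bind (iterMap n f k)

/-- Size of the domain of a partial injection. -/
def domCard (n : ℕ) (α : PInj n) : ℕ :=
  (Finset.univ.filter (fun x => α.val x ≠ none)).card

/-- `α` is nilpotent: some positive power is the empty map. -/
def Nilpotent (n : ℕ) (α : PInj n) : Prop :=
  ∃ k, 0 < k ∧ ∀ x, iterMap n α.val k x = none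

/-- `|IS_m| = ∑_j binom(m,j)^2 j!`. -/
def cardIS (m : ℕ) : ℕ := ∑ j ∈ Finset.range (m + 1), (m.choose j) ^ 2 * j.factorial


open Classical

section Core
variable {N : ℕ} {f : Fin N → Option (Fin N)}

theorem iterMap_zero (f : Fin N → Option (Fin N)) (x) : iterMap N f 0 x = some x := rfl

theorem iterMap_one (f : Fin N → Option (Fin N)) (x) : iterMap N f 1 x = f x := by
  show (f x).bind _ = f x
  cases f x <;> rfl

theorem iterMap_succ (f : Fin N → Option (Fin N)) (k x) :
    iterMap N f (k+1) x = (f x).bind (iterMap N f k) := rfl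

theorem iterMap_add (f : Fin N → Option (Fin N)) (k l : ℕ) (x) :
    iterMap N f (k + l) x = (iterMap N f k x).bind (iterMap N f l) := by
  induction k generalizing x with
  | zero => simp [iterMap]
  | succ k ih =>
    rw [Nat.succ_add, iterMap_succ, iterMap_succ]
    cases f x <;> simp [ih]

theorem iterMap_succ' (f : Fin N → Option (Fin N)) (k x) :
    iterMap N f (k+1) x = (iterMap N f k x).bind (fun y => f y) := by
  rw [iterMap_add f k 1]
  cases iterMap N f k x <;> simp [iterMap_one]

/-- iterates of injective partial maps are injective -/
theorem iterMap_inj (hf : IsPInj N f) (k : ℕ) {a b c} :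
    iterMap N f k a = some c → iterMap N f k b = some c → a = b := by
  induction k generalizing c with
  | zero => intro h1 h2; simp [iterMap] at h1 h2; rw [h1, h2]
  | succ k ih =>
    intro h1 h2
    rw [iterMap_succ' ] at h1 h2
    rcases h1' : iterMap N f k a with _ | a' <;> rw [h1'] at h1 <;> simp at h1
    rcases h2' : iterMap N f k b with _ | b' <;> rw [h2'] at h2 <;> simp at h2
    have : a' = b' := hf _ _ _ h1 h2
    exact ih h1' (this ▸ h2')

def Reach (f : Fin N → Option (Fin N)) (x y : Fin N) : Prop := ∃ k, iterMap N f k x = some y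

def Cyc (f : Fin N → Option (Fin N)) (x : Fin N) : Prop :=
  ∃ k, 0 < k ∧ iterMap N f k x = some x

theorem reach_refl (f) (x : Fin N) : Reach f x x := ⟨0, rfl⟩

theorem reach_trans {x y z} : Reach f x y → Reach f y z → Reach f x z := by
  rintro ⟨k, hk⟩ ⟨l, hl⟩
  exact ⟨k + l, by rw [iterMap_add, hk]; exact hl⟩

theorem reach_step {x y} (h : f x = some y) : Reach f x y := ⟨1, by rwa [iterMap_one]⟩

/-- multiples of a cycle length -/
theorem cyc_mul {x} (k : ℕ) (hk : iterMap N f k x = some x) (M : ℕ) :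
    iterMap N f (M * k) x = some x := by
  induction M with
  | zero => simp [iterMap]
  | succ M ih => rw [Nat.succ_mul, iterMap_add, ih]; exact hk

/-- from a cyclic point, anything reached can reach back (and is cyclic) -/
theorem cyc_reach_back {x y} (hx : Cyc f x) (hxy : Reach f x y) :
    Reach f y x ∧ Cyc f y := by
  obtain ⟨p, hp, hpx⟩ := hx
  obtain ⟨k, hk⟩ := hxy
  have hM : k ≤ (k + 1) * p := le_trans (by omega) (Nat.le_mul_of_pos_right (k+1) hp)
  have hMpos : 0 < (k + 1) * p := Nat.mul_pos (by omega) hp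
  have hMx : iterMap N f ((k + 1) * p) x = some x := cyc_mul p hpx (k + 1)
  have hsplit : iterMap N f (k + ((k + 1) * p - k)) x = some x := by
    rwa [Nat.add_sub_cancel' hM]
  rw [iterMap_add, hk] at hsplit
  simp only [Option.bind_some] at hsplit
  refine ⟨⟨(k + 1) * p - k, hsplit⟩, ?_⟩
  refine ⟨((k + 1) * p - k) + k, by omega, ?_⟩
  rw [iterMap_add, hsplit]
  simpa using hk

/-- image of a cyclic point is cyclic -/
theorem cyc_succ {x} (hx : Cyc f x) : ∃ w, f x = some w ∧ Cyc f w := by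
  obtain ⟨k, hk, hkx⟩ := hx
  obtain ⟨j, rfl⟩ : ∃ j, k = j + 1 := ⟨k - 1, by omega⟩
  rw [iterMap_succ] at hkx
  rcases hw : f x with _ | w
  · rw [hw] at hkx; simp at hkx
  · rw [hw] at hkx; simp only [Option.bind_some] at hkx
    exact ⟨w, rfl, (cyc_reach_back ⟨j+1, by omega,
      by rw [iterMap_succ, hw]; simpa using hkx⟩ (reach_step hw)).2⟩

/-- a preimage of a cyclic point is cyclic (needs injectivity) -/
theorem cyc_pred (hf : IsPInj N f) {z w} (hz : f z = some w) (hw : Cyc f w) : Cyc f z := by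
  obtain ⟨k, hk, hkw⟩ := hw
  obtain ⟨j, rfl⟩ : ∃ j, k = j + 1 := ⟨k - 1, by omega⟩
  rw [iterMap_succ'] at hkw
  rcases hp : iterMap N f j w with _ | p
  · rw [hp] at hkw; simp at hkw
  · rw [hp] at hkw; simp only [Option.bind_some] at hkw
    have hzp : z = p := hf z p w hz hkw
    subst hzp
    exact (cyc_reach_back ⟨j+1, by omega,
      by rw [iterMap_succ', hp]; simpa using hkw⟩ ⟨j, hp⟩).2

/-- Nilpotency is equivalent to having no cyclic point. -/
theorem nilpotent_iff_no_cyc (α : PInj N) :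
    Nilpotent N α ↔ ∀ x, ¬ Cyc α.val x := by
  constructor
  · rintro ⟨K, hK, hKn⟩ x ⟨k, hk, hkx⟩
    have h1 : iterMap N α.val (K * k) x = some x := cyc_mul (f := α.val) k hkx K
    have h2 : iterMap N α.val (K + (K * k - K)) x = none := by
      rw [iterMap_add, hKn x]; rfl
    rw [Nat.add_sub_cancel' (Nat.le_mul_of_pos_right K hk)] at h2
    rw [h1] at h2; simp at h2
  · intro hnc
    refine ⟨N + 1, by omega, fun x => ?_⟩
    by_contra hx
    rcases h : iterMap N α.val (N+1) x with _ | w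
    · exact hx h
    -- build g : Fin (N+2) → Fin N
    have hdef : ∀ i, i ≤ N + 1 → ∃ y, iterMap N α.val i x = some y := by
      intro i hi
      rcases hy : iterMap N α.val i x with _ | y
      · exfalso
        have : iterMap N α.val (i + (N+1-i)) x = none := by
          rw [iterMap_add, hy]; rfl
        rw [Nat.add_sub_cancel' hi, h] at this
        simp at this
      · exact ⟨y, rfl⟩
    have hN : 0 < N := by
      rcases Nat.eq_zero_or_pos N with h0 | h0
      · exact absurd x.isLt (by omega)
      · exact h0
    let g : Fin (N + 2) → Fin N := fun i => (hdef i.val (by omega)).choose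
    have hg : ∀ i : Fin (N+2), iterMap N α.val i.val x = some (g i) :=
      fun i => (hdef i.val (by omega)).choose_spec
    obtain ⟨i, j, hij, hgij⟩ := Fintype.exists_ne_map_eq_of_card_lt g (by simp only [Fintype.card_fin]; omega)
    -- wlog i < j
    rcases Nat.lt_or_ge i.val j.val with hlt | hge
    · have : iterMap N α.val (i.val + (j.val - i.val)) x = some (g j) := by
        rw [Nat.add_sub_cancel' (le_of_lt hlt)]; exact hg j
      rw [iterMap_add, hg i] at this
      rw [← hgij] at this
      exact hnc (g i) ⟨j.val - i.val, by omega, this⟩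
    · have hlt : j.val < i.val := by
        rcases Nat.lt_or_ge j.val i.val with h' | h'
        · exact h'
        · exact absurd (Fin.ext (by omega)) hij
      have : iterMap N α.val (j.val + (i.val - j.val)) x = some (g i) := by
        rw [Nat.add_sub_cancel' (le_of_lt hlt)]; exact hg i
      rw [iterMap_add, hg j] at this
      rw [hgij] at this
      exact hnc (g j) ⟨i.val - j.val, by omega, this⟩

end Core

section Core2
variable {N : ℕ} {f : Fin N → Option (Fin N)}

theorem iterMap_defined_prefix {i j : ℕ} {x y : Fin N}
    (h : iterMap N f (i + j) x = some y) : ∃ z, iterMap N f i x = some z := by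
  rw [iterMap_add] at h
  rcases hz : iterMap N f i x with _ | z
  · rw [hz] at h; simp at h
  · exact ⟨z, rfl⟩

noncomputable def cmax (f : Fin N → Option (Fin N)) (x : Fin N) : Fin N :=
  (Finset.univ.filter (fun y => Reach f x y)).max'
    ⟨x, by simp only [Finset.mem_filter, Finset.mem_univ, true_and]; exact reach_refl f x⟩

theorem le_cmax {x y : Fin N} (h : Reach f x y) : y ≤ cmax f x :=
  Finset.le_max' _ y (by simp only [Finset.mem_filter, Finset.mem_univ, true_and]; exact h)

theorem reach_cmax (f : Fin N → Option (Fin N)) (x : Fin N) : Reach f x (cmax f x) := by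
  have := Finset.max'_mem (Finset.univ.filter (fun y => Reach f x y))
    ⟨x, by simp only [Finset.mem_filter, Finset.mem_univ, true_and]; exact reach_refl f x⟩
  exact (Finset.mem_filter.mp this).2

def IsCMax (f : Fin N → Option (Fin N)) (w : Fin N) : Prop :=
  Cyc f w ∧ ∀ v, Reach f w v → v ≤ w

theorem cmax_congr {x y : Fin N} (hx : Cyc f x) (hxy : Reach f x y) :
    cmax f y = cmax f x := by
  have hyx : Reach f y x := (cyc_reach_back hx hxy).1
  unfold cmax
  congr 1
  ext v
  simp only [Finset.mem_filter, Finset.mem_univ, true_and]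
  exact ⟨fun h => reach_trans hxy h, fun h => reach_trans hyx h⟩

theorem isCMax_cmax (hx : Cyc f x) : IsCMax f (cmax f x) := by
  refine ⟨(cyc_reach_back hx (reach_cmax f x)).2, fun v hv => ?_⟩
  have : Reach f x v := reach_trans (reach_cmax f x) hv
  have h1 := le_cmax this
  exact h1

theorem IsCMax.cmax_eq (hw : IsCMax f w) : cmax f w = w :=
  le_antisymm (hw.2 _ (reach_cmax f w)) (le_cmax (reach_refl f w))

end Core2

section Bij
variable {m : ℕ}

noncomputable def nextMax (b : Fin m → Option (Fin m)) (w : Fin m) : Fin (m+1) :=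
  if hN : (Finset.univ.filter (fun M => IsCMax b M ∧ w < M)).Nonempty
  then ((Finset.univ.filter (fun M => IsCMax b M ∧ w < M)).min' hN).castSucc
  else Fin.last m

noncomputable def Fmap (b : Fin m → Option (Fin m)) : Fin (m+1) → Option (Fin (m+1)) :=
  fun x => if hx : x = Fin.last m then none else
    match b (x.castPred hx) with
    | none => none
    | some w => if IsCMax b w then some (nextMax b w) else some w.castSucc

theorem Fmap_last (b : Fin m → Option (Fin m)) : Fmap b (Fin.last m) = none := by
  simp [Fmap]

theorem Fmap_castSucc_none {b : Fin m → Option (Fin m)} {z : Fin m} (h : b z = none) :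
    Fmap b z.castSucc = none := by
  have hne : z.castSucc ≠ Fin.last m := Fin.ne_of_lt (Fin.castSucc_lt_last z)
  simp only [Fmap, dif_neg hne, Fin.castPred_castSucc, h]

theorem Fmap_castSucc_notmax {b : Fin m → Option (Fin m)} {z w : Fin m} (h : b z = some w)
    (hw : ¬ IsCMax b w) : Fmap b z.castSucc = some w.castSucc := by
  have hne : z.castSucc ≠ Fin.last m := Fin.ne_of_lt (Fin.castSucc_lt_last z)
  simp only [Fmap, dif_neg hne, Fin.castPred_castSucc, h, if_neg hw]

theorem Fmap_castSucc_max {b : Fin m → Option (Fin m)} {z w : Fin m} (h : b z = some w)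
    (hw : IsCMax b w) : Fmap b z.castSucc = some (nextMax b w) := by
  have hne : z.castSucc ≠ Fin.last m := Fin.ne_of_lt (Fin.castSucc_lt_last z)
  simp only [Fmap, dif_neg hne, Fin.castPred_castSucc, h, if_pos hw]

theorem nextMax_inj {b : Fin m → Option (Fin m)} {w₁ w₂ : Fin m}
    (h1 : IsCMax b w₁) (h2 : IsCMax b w₂) (h : nextMax b w₁ = nextMax b w₂) : w₁ = w₂ := by
  rcases lt_trichotomy w₁ w₂ with hlt | heq | hlt
  all_goals try assumption
  · exact absurd h (by
      have hN1 : (Finset.univ.filter (fun M => IsCMax b M ∧ w₁ < M)).Nonempty :=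
        ⟨w₂, by simp only [Finset.mem_filter, Finset.mem_univ, true_and]; exact ⟨h2, hlt⟩⟩
      intro hcontra
      rw [nextMax, dif_pos hN1, nextMax] at hcontra
      have hmin := Finset.min'_mem _ hN1
      simp only [Finset.mem_filter, Finset.mem_univ, true_and] at hmin
      have hle : (Finset.univ.filter (fun M => IsCMax b M ∧ w₁ < M)).min' hN1 ≤ w₂ :=
        Finset.min'_le _ _ (by simp only [Finset.mem_filter, Finset.mem_univ, true_and]; exact ⟨h2, hlt⟩)
      split at hcontra
      · next hN2 =>
        have h2min := Finset.min'_mem _ hN2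
        simp only [Finset.mem_filter, Finset.mem_univ, true_and] at h2min
        have := Fin.castSucc_injective m hcontra
        rw [this] at hle hmin
        exact absurd (lt_of_le_of_lt hle h2min.2) (lt_irrefl _)
      · exact absurd hcontra (Fin.ne_of_lt (Fin.castSucc_lt_last _))) 
  · -- w₂ < w₁ : symmetric
    exact absurd h.symm (by
      have hN1 : (Finset.univ.filter (fun M => IsCMax b M ∧ w₂ < M)).Nonempty :=
        ⟨w₁, by simp only [Finset.mem_filter, Finset.mem_univ, true_and]; exact ⟨h1, hlt⟩⟩
      intro hcontra
      rw [nextMax, dif_pos hN1, nextMax] at hcontra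
      have hmin := Finset.min'_mem _ hN1
      simp only [Finset.mem_filter, Finset.mem_univ, true_and] at hmin
      have hle : (Finset.univ.filter (fun M => IsCMax b M ∧ w₂ < M)).min' hN1 ≤ w₁ :=
        Finset.min'_le _ _ (by simp only [Finset.mem_filter, Finset.mem_univ, true_and]; exact ⟨h1, hlt⟩)
      split at hcontra
      · next hN2 =>
        have h2min := Finset.min'_mem _ hN2
        simp only [Finset.mem_filter, Finset.mem_univ, true_and] at h2min
        have := Fin.castSucc_injective m hcontra
        rw [this] at hle hmin
        exact absurd (lt_of_le_of_lt hle h2min.2) (lt_irrefl _)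
      · exact absurd hcontra (Fin.ne_of_lt (Fin.castSucc_lt_last _)))

theorem Fmap_isPInj {b : Fin m → Option (Fin m)} (hb : IsPInj m b) : IsPInj (m+1) (Fmap b) := by
  intro x y c hx hy
  by_cases hxl : x = Fin.last m
  · rw [hxl, Fmap_last] at hx; simp at hx
  by_cases hyl : y = Fin.last m
  · rw [hyl, Fmap_last] at hy; simp at hy
  obtain ⟨x', rfl⟩ : ∃ x', x = x'.castSucc := ⟨x.castPred hxl, by simp⟩
  obtain ⟨y', rfl⟩ : ∃ y', y = y'.castSucc := ⟨y.castPred hyl, by simp⟩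
  suffices h : x' = y' by rw [h]
  rcases hbx : b x' with _ | wx
  · rw [Fmap_castSucc_none hbx] at hx; simp at hx
  rcases hby : b y' with _ | wy
  · rw [Fmap_castSucc_none hby] at hy; simp at hy
  by_cases hmx : IsCMax b wx <;> by_cases hmy : IsCMax b wy
  · rw [Fmap_castSucc_max hbx hmx] at hx
    rw [Fmap_castSucc_max hby hmy] at hy
    have : nextMax b wx = nextMax b wy := by
      rw [← Option.some_inj, hx, hy]
    have := nextMax_inj hmx hmy this
    exact hb x' y' wx hbx (this ▸ hby)
  · rw [Fmap_castSucc_max hbx hmx] at hx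
    rw [Fmap_castSucc_notmax hby hmy] at hy
    have hc : nextMax b wx = wy.castSucc := by rw [← Option.some_inj, hx, hy]
    exfalso
    rw [nextMax] at hc
    split at hc
    · next hN =>
      have hmin := Finset.min'_mem _ hN
      simp only [Finset.mem_filter, Finset.mem_univ, true_and] at hmin
      have := Fin.castSucc_injective m hc
      rw [this] at hmin
      exact hmy hmin.1
    · exact (Fin.ne_of_lt (Fin.castSucc_lt_last wy)) hc.symm
  · rw [Fmap_castSucc_notmax hbx hmx] at hx
    rw [Fmap_castSucc_max hby hmy] at hy
    have hc : nextMax b wy = wx.castSucc := by rw [← Option.some_inj, hy, hx]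
    exfalso
    rw [nextMax] at hc
    split at hc
    · next hN =>
      have hmin := Finset.min'_mem _ hN
      simp only [Finset.mem_filter, Finset.mem_univ, true_and] at hmin
      have := Fin.castSucc_injective m hc
      rw [this] at hmin
      exact hmx hmin.1
    · exact (Fin.ne_of_lt (Fin.castSucc_lt_last wx)) hc.symm
  · rw [Fmap_castSucc_notmax hbx hmx] at hx
    rw [Fmap_castSucc_notmax hby hmy] at hy
    have : wx = wy := by
      have := hx.trans hy.symm
      exact Fin.castSucc_injective m (Option.some_inj.mp this)
    exact hb x' y' wx hbx (this ▸ hby)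

end Bij
section Bij2
variable {m : ℕ} {b : Fin m → Option (Fin m)}

/-- transport of iterates along non-cyclic points -/
theorem Fmap_iter_noncyc (hb : IsPInj m b) :
    ∀ (k : ℕ) {z : Fin m}, ¬ Cyc b z →
    iterMap (m+1) (Fmap b) k z.castSucc = (iterMap m b k z).map Fin.castSucc := by
  intro k
  induction k with
  | zero => intro z _; rfl
  | succ k ih =>
    intro z hz
    rw [iterMap_succ, iterMap_succ]
    rcases hbz : b z with _ | w
    · rw [Fmap_castSucc_none hbz]; rfl
    · have hw : ¬ IsCMax b w := fun hw => hz (cyc_pred hb hbz hw.1)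
      have hwc : ¬ Cyc b w := fun hwc => hz (cyc_pred hb hbz hwc)
      rw [Fmap_castSucc_notmax hbz hw]
      simp only [Option.bind_some]
      exact ih hwc

theorem cyc_of_Fmap_cyc (hb : IsPInj m b) {z : Fin m}
    (h : Cyc (Fmap b) z.castSucc) : Cyc b z := by
  by_contra hz
  obtain ⟨k, hk, hkz⟩ := h
  rw [Fmap_iter_noncyc hb k hz] at hkz
  rw [Option.map_eq_some_iff] at hkz
  obtain ⟨a, ha, ha2⟩ := hkz
  have : a = z := Fin.castSucc_injective m ha2
  exact hz ⟨k, hk, this ▸ ha⟩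

/-- transport of iterates along a cycle while avoiding landing on the cycle max -/
theorem Fmap_iter_cyc_avoid (hb : IsPInj m b) {z : Fin m} (hz : Cyc b z) :
    ∀ (t : ℕ), (∀ i, 1 ≤ i → i ≤ t → iterMap m b i z ≠ some (cmax b z)) →
    iterMap (m+1) (Fmap b) t z.castSucc = (iterMap m b t z).map Fin.castSucc := by
  intro t
  induction t with
  | zero => intro _; rfl
  | succ t ih =>
    intro havoid
    rw [iterMap_succ', iterMap_succ']
    rw [ih (fun i h1 h2 => havoid i h1 (by omega))]
    rcases hq : iterMap m b t z with _ | q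
    · rfl
    · simp only [Option.map_some, Option.bind_some]
      rcases hbq : b q with _ | w
      · rw [Fmap_castSucc_none hbq]; rfl
      · have hw1 : iterMap m b (t+1) z = some w := by
          rw [iterMap_succ', hq]; simpa using hbq
        have hwcyc : Cyc b w := (cyc_reach_back hz ⟨t+1, hw1⟩).2
        have hwnm : ¬ IsCMax b w := by
          intro hmw
          have h1 : cmax b w = cmax b z := cmax_congr hz ⟨t+1, hw1⟩
          have := hmw.cmax_eq
          exact havoid (t+1) (by omega) (le_refl _) (by rw [hw1, ← this, h1])
        rw [Fmap_castSucc_notmax hbq hwnm]; rfl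

/-- along an `Fmap` path between (casts of) cyclic points, `cmax` does not decrease -/
theorem Fmap_path_cmax_le (hb : IsPInj m b) :
    ∀ (t : ℕ) {z z' : Fin m}, Cyc b z →
    iterMap (m+1) (Fmap b) t z.castSucc = some z'.castSucc →
    Cyc b z' ∧ cmax b z ≤ cmax b z' := by
  intro t
  induction t with
  | zero =>
    intro z z' hz h
    simp only [iterMap_zero, Option.some_inj] at h
    have : z = z' := Fin.castSucc_injective m h
    subst this; exact ⟨hz, le_refl _⟩
  | succ t ih =>
    intro z z' hz h
    rw [iterMap_succ] at h
    rcases hu : Fmap b z.castSucc with _ | u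
    · rw [hu] at h; simp at h
    rw [hu] at h; simp only [Option.bind_some] at h
    by_cases hul : u = Fin.last m
    · subst hul
      exfalso
      cases t with
      | zero =>
        simp only [iterMap_zero, Option.some_inj] at h
        exact (Fin.ne_of_lt (Fin.castSucc_lt_last z')) h.symm
      | succ t =>
        rw [iterMap_succ, Fmap_last] at h
        simp at h
    obtain ⟨z₁, rfl⟩ : ∃ z₁, u = z₁.castSucc := ⟨u.castPred hul, by simp⟩
    -- edge lemma
    have hedge : Cyc b z₁ ∧ cmax b z ≤ cmax b z₁ := by
      rcases hbz : b z with _ | w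
      · rw [Fmap_castSucc_none hbz] at hu; simp at hu
      by_cases hmw : IsCMax b w
      · rw [Fmap_castSucc_max hbz hmw] at hu
        have hnm : nextMax b w = z₁.castSucc := Option.some_inj.mp hu
        rw [nextMax] at hnm
        split at hnm
        · next hN =>
          have hmin := Finset.min'_mem _ hN
          simp only [Finset.mem_filter, Finset.mem_univ, true_and] at hmin
          have heq := Fin.castSucc_injective m hnm
          rw [heq] at hmin
          refine ⟨hmin.1.1, ?_⟩
          have h1 : cmax b z = cmax b w := (cmax_congr hz (reach_step hbz)).symm
          rw [h1, hmw.cmax_eq, hmin.1.cmax_eq]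
          exact le_of_lt hmin.2
        · exact absurd hnm (Ne.symm (Fin.ne_of_lt (Fin.castSucc_lt_last z₁)))
      · rw [Fmap_castSucc_notmax hbz hmw] at hu
        have heq : w = z₁ := Fin.castSucc_injective m (Option.some_inj.mp hu)
        subst heq
        refine ⟨(cyc_reach_back hz (reach_step hbz)).2, ?_⟩
        rw [(cmax_congr hz (reach_step hbz))]
    obtain ⟨h1, h2⟩ := ih hedge.1 h
    exact ⟨h1, le_trans hedge.2 h2⟩

theorem Fmap_no_cyc (hb : IsPInj m b) : ∀ x, ¬ Cyc (Fmap b) x := by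
  intro x hcyc
  have hxl : x ≠ Fin.last m := by
    rintro rfl
    obtain ⟨w, hw, _⟩ := cyc_succ hcyc
    rw [Fmap_last] at hw
    simp at hw
  obtain ⟨z, rfl⟩ : ∃ z, x = z.castSucc := ⟨x.castPred hxl, by simp⟩
  have hcz : Cyc b z := cyc_of_Fmap_cyc hb hcyc
  set C := cmax b z with hC
  have hCmax : IsCMax b C := isCMax_cmax hcz
  have hex : ∃ s, 0 < s ∧ iterMap m b s z = some C := by
    obtain ⟨k, hk⟩ := reach_cmax b z
    rcases Nat.eq_zero_or_pos k with h0 | hpos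
    · subst h0
      simp only [iterMap_zero, Option.some_inj] at hk
      obtain ⟨l, hl, hlz⟩ := hcz
      exact ⟨l, hl, by rw [hC, ← hk]; exact hlz⟩
    · exact ⟨k, hpos, hk⟩
  set s := Nat.find hex with hs_def
  obtain ⟨hs_pos, hs⟩ := Nat.find_spec hex
  obtain ⟨p, hp⟩ : ∃ p, iterMap m b (s-1) z = some p := by
    apply iterMap_defined_prefix (j := 1)
    rw [show s - 1 + 1 = s by omega]
    exact hs
  have hbp : b p = some C := by
    have h1 : iterMap m b ((s-1)+1) z = (iterMap m b (s-1) z).bind (fun y => b y) :=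
      iterMap_succ' b (s-1) z
    rw [show s - 1 + 1 = s by omega, hs, hp] at h1
    simpa using h1.symm
  have havoid : ∀ i, 1 ≤ i → i ≤ s - 1 → iterMap m b i z ≠ some C := by
    intro i h1 h2 hcon
    exact Nat.find_min hex (show i < s by omega) ⟨by omega, hcon⟩
  have hreach : iterMap (m+1) (Fmap b) (s-1) z.castSucc = some p.castSucc := by
    rw [Fmap_iter_cyc_avoid hb hcz (s-1) havoid, hp]; rfl
  have hjump : Fmap b p.castSucc = some (nextMax b C) := Fmap_castSucc_max hbp hCmax
  have hRzu : Reach (Fmap b) z.castSucc (nextMax b C) :=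
    reach_trans ⟨s-1, hreach⟩ (reach_step hjump)
  have hback := cyc_reach_back hcyc hRzu
  by_cases hN : (Finset.univ.filter (fun M => IsCMax b M ∧ C < M)).Nonempty
  · have hmin := Finset.min'_mem _ hN
    simp only [Finset.mem_filter, Finset.mem_univ, true_and] at hmin
    have hNM : nextMax b C
        = ((Finset.univ.filter (fun M => IsCMax b M ∧ C < M)).min' hN).castSucc := by
      rw [nextMax, dif_pos hN]
    obtain ⟨t, ht⟩ := hback.1
    rw [hNM] at ht
    have hPL := Fmap_path_cmax_le hb t hmin.1.1 ht
    rw [hmin.1.cmax_eq] at hPL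
    exact absurd (lt_of_le_of_lt hPL.2 hmin.2) (lt_irrefl _)
  · have hNM : nextMax b C = Fin.last m := by rw [nextMax, dif_neg hN]
    rw [hNM] at hback
    obtain ⟨w, hw, _⟩ := cyc_succ hback.2
    rw [Fmap_last] at hw
    simp at hw

theorem Fmap_nilpotent (hb : IsPInj m b) :
    Nilpotent (m+1) ⟨Fmap b, Fmap_isPInj hb⟩ := by
  exact (nilpotent_iff_no_cyc _).mpr (Fmap_no_cyc hb)

end Bij2
section Gdef
variable {m : ℕ}

def Rec' (a : Fin (m+1) → Option (Fin (m+1))) (u : Fin (m+1)) : Prop :=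
  u ≠ Fin.last m ∧ Reach a u (Fin.last m) ∧
    ∀ w k, 0 < k → iterMap (m+1) a k w = some u → w < u

noncomputable def maxAnc (a : Fin (m+1) → Option (Fin (m+1))) (x : Fin (m+1)) : Fin (m+1) :=
  (Finset.univ.filter (fun w => Reach a w x)).max'
    ⟨x, by simp only [Finset.mem_filter, Finset.mem_univ, true_and]; exact reach_refl a x⟩

theorem maxAnc_reach (a : Fin (m+1) → Option (Fin (m+1))) (x : Fin (m+1)) :
    Reach a (maxAnc a x) x := by
  have := Finset.max'_mem (Finset.univ.filter (fun w => Reach a w x))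
    ⟨x, by simp only [Finset.mem_filter, Finset.mem_univ, true_and]; exact reach_refl a x⟩
  exact (Finset.mem_filter.mp this).2

theorem le_maxAnc {a : Fin (m+1) → Option (Fin (m+1))} {w x : Fin (m+1)}
    (h : Reach a w x) : w ≤ maxAnc a x :=
  Finset.le_max' _ w (by simp only [Finset.mem_filter, Finset.mem_univ, true_and]; exact h)

def toFin (z : Fin m) (u : Fin (m+1)) : Fin m :=
  if h : u = Fin.last m then z else u.castPred h

theorem toFin_ne_last {z : Fin m} {u : Fin (m+1)} (h : u ≠ Fin.last m) :
    toFin z u = u.castPred h := dif_neg h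

theorem toFin_inj {z₁ z₂ : Fin m} {u₁ u₂ : Fin (m+1)} (h1 : u₁ ≠ Fin.last m)
    (h2 : u₂ ≠ Fin.last m) (h : toFin z₁ u₁ = toFin z₂ u₂) : u₁ = u₂ := by
  rw [toFin_ne_last h1, toFin_ne_last h2] at h
  rw [← Fin.castSucc_castPred u₁ h1, ← Fin.castSucc_castPred u₂ h2, h]

noncomputable def Gmap (a : Fin (m+1) → Option (Fin (m+1))) : Fin m → Option (Fin m) :=
  fun z => match a z.castSucc with
  | none => none
  | some u => if u = Fin.last m ∨ Rec' a u then some (toFin z (maxAnc a z.castSucc))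
              else some (toFin z u)

theorem Gmap_none {a : Fin (m+1) → Option (Fin (m+1))} {z : Fin m}
    (h : a z.castSucc = none) : Gmap a z = none := by
  simp only [Gmap, h]

theorem Gmap_end {a : Fin (m+1) → Option (Fin (m+1))} {z : Fin m} {u : Fin (m+1)}
    (h : a z.castSucc = some u) (hu : u = Fin.last m ∨ Rec' a u) :
    Gmap a z = some (toFin z (maxAnc a z.castSucc)) := by
  simp only [Gmap, h, if_pos hu]

theorem Gmap_mid {a : Fin (m+1) → Option (Fin (m+1))} {z : Fin m} {u : Fin (m+1)}
    (h : a z.castSucc = some u) (hu : ¬ (u = Fin.last m ∨ Rec' a u)) :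
    Gmap a z = some (toFin z u) := by
  simp only [Gmap, h, if_neg hu]

variable {a : Fin (m+1) → Option (Fin (m+1))}

theorem reach_last_eq (hlast : a (Fin.last m) = none) {x : Fin (m+1)}
    (h : Reach a (Fin.last m) x) : x = Fin.last m := by
  obtain ⟨k, hk⟩ := h
  cases k with
  | zero => simpa [iterMap] using hk.symm
  | succ k => rw [iterMap_succ, hlast] at hk; simp at hk

theorem maxAnc_ne_last (hlast : a (Fin.last m) = none) {x : Fin (m+1)}
    (hx : x ≠ Fin.last m) : maxAnc a x ≠ Fin.last m := by
  intro h
  have := maxAnc_reach a x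
  rw [h] at this
  exact hx (reach_last_eq hlast this)

/-- the maximal ancestor of a non-last point is a "record" (given no cycles), provided
    the point leads to `last`. -/
theorem rec'_maxAnc (hlast : a (Fin.last m) = none) (hnc : ∀ x, ¬ Cyc a x)
    {x : Fin (m+1)} (hx : x ≠ Fin.last m) (hE : Reach a x (Fin.last m)) :
    Rec' a (maxAnc a x) := by
  refine ⟨maxAnc_ne_last hlast hx, reach_trans (maxAnc_reach a x) hE, ?_⟩
  intro w k hk hw
  have hwx : Reach a w x := reach_trans ⟨k, hw⟩ (maxAnc_reach a x)
  have hle : w ≤ maxAnc a x := le_maxAnc hwx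
  rcases lt_or_eq_of_le hle with h | h
  · exact h
  · exfalso
    subst h
    exact hnc _ ⟨k, hk, hw⟩

theorem Gmap_isPInj (ha : IsPInj (m+1) a) (hlast : a (Fin.last m) = none)
    (hnc : ∀ x, ¬ Cyc a x) : IsPInj m (Gmap a) := by
  have hcsl : ∀ z : Fin m, z.castSucc ≠ Fin.last m :=
    fun z => Fin.ne_of_lt (Fin.castSucc_lt_last z)
  -- a point whose image is last-or-record leads to last
  have hEnd : ∀ (z : Fin m) (u : Fin (m+1)), a z.castSucc = some u →
      (u = Fin.last m ∨ Rec' a u) → Reach a z.castSucc (Fin.last m) := by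
    intro z u h hu
    rcases hu with rfl | hu
    · exact reach_step h
    · exact reach_trans (reach_step h) hu.2.1
  intro z₁ z₂ c h1 h2
  rcases ha1 : a z₁.castSucc with _ | u₁
  · rw [Gmap_none ha1] at h1; simp at h1
  rcases ha2 : a z₂.castSucc with _ | u₂
  · rw [Gmap_none ha2] at h2; simp at h2
  have main : ∀ (z₁ z₂ : Fin m) (u₁ u₂ : Fin (m+1)), a z₁.castSucc = some u₁ →
      a z₂.castSucc = some u₂ → (u₁ = Fin.last m ∨ Rec' a u₁) →
      ¬ (u₂ = Fin.last m ∨ Rec' a u₂) →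
      toFin z₁ (maxAnc a z₁.castSucc) = toFin z₂ u₂ → False := by
    intro z₁ z₂ u₁ u₂ ha1 ha2 hu1 hu2 heq
    have hW : maxAnc a z₁.castSucc ≠ Fin.last m := maxAnc_ne_last hlast (hcsl z₁)
    have hu2l : u₂ ≠ Fin.last m := fun h => hu2 (Or.inl h)
    have : maxAnc a z₁.castSucc = u₂ := toFin_inj hW hu2l heq
    apply hu2
    right
    rw [← this]
    exact rec'_maxAnc hlast hnc (hcsl z₁) (hEnd z₁ u₁ ha1 hu1)
  by_cases hu1 : u₁ = Fin.last m ∨ Rec' a u₁ <;> by_cases hu2 : u₂ = Fin.last m ∨ Rec' a u₂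
  · -- both ends
    rw [Gmap_end ha1 hu1] at h1
    rw [Gmap_end ha2 hu2] at h2
    have hW1 : maxAnc a z₁.castSucc ≠ Fin.last m := maxAnc_ne_last hlast (hcsl z₁)
    have hW2 : maxAnc a z₂.castSucc ≠ Fin.last m := maxAnc_ne_last hlast (hcsl z₂)
    have hWeq : maxAnc a z₁.castSucc = maxAnc a z₂.castSucc :=
      toFin_inj hW1 hW2 (Option.some_inj.mp (h1.trans h2.symm))
    set W := maxAnc a z₁.castSucc with hWdef
    obtain ⟨s, hsr⟩ := maxAnc_reach a z₁.castSucc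
    obtain ⟨t, htr⟩ := maxAnc_reach a z₂.castSucc
    rw [← hWeq] at htr
    -- wlog s ≤ t
    have key : ∀ (z₁ z₂ : Fin m) (u₁ : Fin (m+1)) (s t : ℕ), s < t →
        a z₁.castSucc = some u₁ → (u₁ = Fin.last m ∨ Rec' a u₁) →
        iterMap (m+1) a s W = some z₁.castSucc →
        iterMap (m+1) a t W = some z₂.castSucc →
        maxAnc a z₂.castSucc = W → False := by
      intro z₁ z₂ u₁ s t hst ha1 hu1 hsr htr hma
      have hsplit : iterMap (m+1) a (s + (t - s)) W = some z₂.castSucc := by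
        rwa [Nat.add_sub_cancel' (le_of_lt hst)]
      rw [iterMap_add, hsr] at hsplit
      simp only [Option.bind_some] at hsplit
      -- t-s ≥ 1 : first step is u₁
      obtain ⟨d, hd⟩ : ∃ d, t - s = d + 1 := ⟨t - s - 1, by omega⟩
      rw [hd, iterMap_succ, ha1] at hsplit
      simp only [Option.bind_some] at hsplit
      rcases hu1 with rfl | hu1
      · cases d with
        | zero =>
          simp only [iterMap_zero, Option.some_inj] at hsplit
          exact (hcsl z₂) hsplit.symm
        | succ d =>
          rw [iterMap_succ, hlast] at hsplit
          simp at hsplit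
      · -- u₁ is a record; W strictly reaches u₁ so W < u₁, but u₁ reaches z₂
        have h1 : W < u₁ := hu1.2.2 W (s+1) (by omega)
          (by rw [iterMap_add, hsr]; simp only [Option.bind_some, iterMap_one]; exact ha1)
        have h2 : u₁ ≤ maxAnc a z₂.castSucc := le_maxAnc ⟨d, hsplit⟩
        rw [hma] at h2
        exact absurd (lt_of_lt_of_le h1 h2) (lt_irrefl _)
    rcases lt_trichotomy s t with hst | hst | hst
    · exact absurd (key z₁ z₂ u₁ s t hst ha1 hu1 hsr htr hWeq.symm) (fun h => h)
    · subst hst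
      exact Fin.castSucc_injective m (Option.some_inj.mp (hsr.symm.trans htr))
    · exact absurd (key z₂ z₁ u₂ t s hst ha2 hu2 htr hsr hWdef.symm) (fun h => h)
  · exfalso
    rw [Gmap_end ha1 hu1] at h1
    rw [Gmap_mid ha2 hu2] at h2
    exact main z₁ z₂ u₁ u₂ ha1 ha2 hu1 hu2 (Option.some_inj.mp (h1.trans h2.symm))
  · exfalso
    rw [Gmap_mid ha1 hu1] at h1
    rw [Gmap_end ha2 hu2] at h2
    exact main z₂ z₁ u₂ u₁ ha2 ha1 hu2 hu1 (Option.some_inj.mp (h2.trans h1.symm))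
  · rw [Gmap_mid ha1 hu1] at h1
    rw [Gmap_mid ha2 hu2] at h2
    have hu1l : u₁ ≠ Fin.last m := fun h => hu1 (Or.inl h)
    have hu2l : u₂ ≠ Fin.last m := fun h => hu2 (Or.inl h)
    have : u₁ = u₂ := toFin_inj hu1l hu2l (Option.some_inj.mp (h1.trans h2.symm))
    exact Fin.castSucc_injective m (ha _ _ u₁ ha1 (this ▸ ha2))

end Gdef
section RT1
variable {m : ℕ} {b : Fin m → Option (Fin m)}

theorem castSucc_ne_last (z : Fin m) : z.castSucc ≠ Fin.last m :=
  Fin.ne_of_lt (Fin.castSucc_lt_last z)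

theorem Fmap_reach_nextMax (hb : IsPInj m b) {z : Fin m} (hz : Cyc b z) :
    Reach (Fmap b) z.castSucc (nextMax b (cmax b z)) := by
  set C := cmax b z with hC
  have hCmax : IsCMax b C := isCMax_cmax hz
  have hex : ∃ s, 0 < s ∧ iterMap m b s z = some C := by
    obtain ⟨k, hk⟩ := reach_cmax b z
    rcases Nat.eq_zero_or_pos k with h0 | hpos
    · subst h0
      simp only [iterMap_zero, Option.some_inj] at hk
      obtain ⟨l, hl, hlz⟩ := hz
      exact ⟨l, hl, by rw [hC, ← hk]; exact hlz⟩
    · exact ⟨k, hpos, hk⟩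
  set s := Nat.find hex with hs_def
  obtain ⟨hs_pos, hs⟩ := Nat.find_spec hex
  obtain ⟨p, hp⟩ : ∃ p, iterMap m b (s-1) z = some p := by
    apply iterMap_defined_prefix (j := 1)
    rw [show s - 1 + 1 = s by omega]
    exact hs
  have hbp : b p = some C := by
    have h1 : iterMap m b ((s-1)+1) z = (iterMap m b (s-1) z).bind (fun y => b y) :=
      iterMap_succ' b (s-1) z
    rw [show s - 1 + 1 = s by omega, hs, hp] at h1
    simpa using h1.symm
  have havoid : ∀ i, 1 ≤ i → i ≤ s - 1 → iterMap m b i z ≠ some C := by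
    intro i h1 h2 hcon
    exact Nat.find_min hex (show i < s by omega) ⟨by omega, hcon⟩
  have hreach : iterMap (m+1) (Fmap b) (s-1) z.castSucc = some p.castSucc := by
    rw [Fmap_iter_cyc_avoid hb hz (s-1) havoid, hp]; rfl
  exact reach_trans ⟨s-1, hreach⟩ (reach_step (Fmap_castSucc_max hbp hCmax))

theorem Fmap_cyc_reach_last (hb : IsPInj m b) :
    ∀ (z : Fin m), Cyc b z → Reach (Fmap b) z.castSucc (Fin.last m) := by
  suffices H : ∀ (q : ℕ) (z : Fin m),
      (Finset.univ.filter (fun M => IsCMax b M ∧ cmax b z < M)).card ≤ q → Cyc b z →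
      Reach (Fmap b) z.castSucc (Fin.last m) by
    exact fun z hz => H _ z le_rfl hz
  intro q
  induction q with
  | zero =>
    intro z hcard hz
    have hR := Fmap_reach_nextMax hb hz
    by_cases hN : (Finset.univ.filter (fun M => IsCMax b M ∧ cmax b z < M)).Nonempty
    · exact absurd hcard (by have := Finset.Nonempty.card_pos hN; omega)
    · rwa [nextMax, dif_neg hN] at hR
  | succ q ih =>
    intro z hcard hz
    have hR := Fmap_reach_nextMax hb hz
    by_cases hN : (Finset.univ.filter (fun M => IsCMax b M ∧ cmax b z < M)).Nonempty
    · have hmin := Finset.min'_mem _ hN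
      simp only [Finset.mem_filter, Finset.mem_univ, true_and] at hmin
      rw [nextMax, dif_pos hN] at hR
      set M := (Finset.univ.filter (fun M => IsCMax b M ∧ cmax b z < M)).min' hN with hM
      have hsub : (Finset.univ.filter (fun M' => IsCMax b M' ∧ cmax b M < M'))
          ⊆ (Finset.univ.filter (fun M' => IsCMax b M' ∧ cmax b z < M')).erase M := by
        intro x hx
        simp only [Finset.mem_filter, Finset.mem_univ, true_and] at hx
        rw [hmin.1.cmax_eq] at hx
        refine Finset.mem_erase.mpr ⟨Fin.ne_of_gt hx.2, ?_⟩
        simp only [Finset.mem_filter, Finset.mem_univ, true_and]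
        exact ⟨hx.1, lt_trans hmin.2 hx.2⟩
      have hcard2 : (Finset.univ.filter (fun M' => IsCMax b M' ∧ cmax b M < M')).card ≤ q := by
        have h1 := Finset.card_le_card hsub
        rw [Finset.card_erase_of_mem (by
          simp only [Finset.mem_filter, Finset.mem_univ, true_and]; exact hmin)] at h1
        omega
      exact reach_trans hR (ih M hcard2 hmin.1.1)
    · rwa [nextMax, dif_neg hN] at hR

theorem cyc_of_Fmap_reach_last (hb : IsPInj m b) {w : Fin m}
    (h : Reach (Fmap b) w.castSucc (Fin.last m)) : Cyc b w := by
  by_contra hc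
  obtain ⟨k, hk⟩ := h
  rw [Fmap_iter_noncyc hb k hc, Option.map_eq_some_iff] at hk
  obtain ⟨x, _, hx⟩ := hk
  exact castSucc_ne_last x hx

theorem Fmap_edge_in (hb : IsPInj m b) {u : Fin (m+1)} {z : Fin m} (hz : Cyc b z)
    (h : Fmap b u = some z.castSucc) :
    ∃ p, u = p.castSucc ∧ Cyc b p ∧ cmax b p ≤ cmax b z := by
  have hul : u ≠ Fin.last m := by
    rintro rfl; rw [Fmap_last] at h; simp at h
  obtain ⟨p, rfl⟩ : ∃ p, u = p.castSucc := ⟨u.castPred hul, by simp⟩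
  refine ⟨p, rfl, ?_⟩
  rcases hbp : b p with _ | w
  · rw [Fmap_castSucc_none hbp] at h; simp at h
  by_cases hmw : IsCMax b w
  · rw [Fmap_castSucc_max hbp hmw] at h
    have hNM : nextMax b w = z.castSucc := Option.some_inj.mp h
    rw [nextMax] at hNM
    split at hNM
    · next hN =>
      have hmin := Finset.min'_mem _ hN
      simp only [Finset.mem_filter, Finset.mem_univ, true_and] at hmin
      have heq := Fin.castSucc_injective m hNM
      rw [heq] at hmin
      have hcp : Cyc b p := cyc_pred hb hbp hmw.1
      refine ⟨hcp, ?_⟩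
      have h1 : cmax b w = cmax b p := cmax_congr hcp (reach_step hbp)
      rw [← h1, hmw.cmax_eq, hmin.1.cmax_eq]
      exact le_of_lt hmin.2
    · exact absurd hNM (Ne.symm (castSucc_ne_last z))
  · rw [Fmap_castSucc_notmax hbp hmw] at h
    have heq : w = z := Fin.castSucc_injective m (Option.some_inj.mp h)
    subst heq
    have hcp : Cyc b p := cyc_pred hb hbp hz
    exact ⟨hcp, le_of_eq (cmax_congr hcp (reach_step hbp)).symm⟩

theorem Fmap_pred (hb : IsPInj m b) :
    ∀ (k : ℕ) (v : Fin (m+1)) (z : Fin m), Cyc b z →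
    iterMap (m+1) (Fmap b) k v = some z.castSucc →
    ∃ v', v = v'.castSucc ∧ Cyc b v' ∧ cmax b v' ≤ cmax b z := by
  intro k
  induction k with
  | zero =>
    intro v z hz h
    simp only [iterMap_zero, Option.some_inj] at h
    exact ⟨z, h, hz, le_rfl⟩
  | succ k ih =>
    intro v z hz h
    rw [iterMap_succ'] at h
    rcases hu : iterMap (m+1) (Fmap b) k v with _ | u
    · rw [hu] at h; simp at h
    rw [hu] at h; simp only [Option.bind_some] at h
    obtain ⟨p, rfl, hcp, hle⟩ := Fmap_edge_in hb hz h
    obtain ⟨v', rfl, hcv, hlev⟩ := ih v p hcp hu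
    exact ⟨v', rfl, hcv, le_trans hlev hle⟩

theorem Fmap_reach_of_cmax_reach (hb : IsPInj m b) {z w : Fin m} (hz : Cyc b z)
    (hCm : cmax b z = z) (hw : Reach b z w) :
    Reach (Fmap b) z.castSucc w.castSucc := by
  by_cases hwz : w = z
  · subst hwz; exact reach_refl _ _
  have hex : ∃ t, 0 < t ∧ iterMap m b t z = some w := by
    obtain ⟨k, hk⟩ := hw
    rcases Nat.eq_zero_or_pos k with h0 | hpos
    · subst h0; simp only [iterMap_zero, Option.some_inj] at hk
      exact absurd hk.symm hwz
    · exact ⟨k, hpos, hk⟩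
  set t := Nat.find hex with ht_def
  obtain ⟨ht_pos, ht⟩ := Nat.find_spec hex
  have havoid : ∀ i, 1 ≤ i → i ≤ t → iterMap m b i z ≠ some (cmax b z) := by
    intro i h1 h2 hcon
    rw [hCm] at hcon
    rcases Nat.lt_or_ge i t with hit | hit
    · -- then iter (t-i) z = some w with 0 < t-i < t : contra minimality
      have hsplit : iterMap m b (i + (t - i)) z = some w := by
        rwa [Nat.add_sub_cancel' (le_of_lt hit)]
      rw [iterMap_add, hcon] at hsplit
      simp only [Option.bind_some] at hsplit
      rcases Nat.eq_zero_or_pos (t - i) with h0 | hpos2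
      · omega
      · exact Nat.find_min hex (show t - i < t by omega) ⟨hpos2, hsplit⟩
    · have : i = t := by omega
      subst this
      rw [ht] at hcon
      exact hwz (Option.some_inj.mp hcon)
  have := Fmap_iter_cyc_avoid hb hz t havoid
  rw [ht] at this
  exact ⟨t, this⟩

theorem rec'_Fmap_iff (hb : IsPInj m b) {w : Fin m} :
    Rec' (Fmap b) w.castSucc ↔ IsCMax b w := by
  constructor
  · rintro ⟨_, hE, hpred⟩
    have hcw : Cyc b w := cyc_of_Fmap_reach_last hb hE
    by_contra hmw
    have hCc : IsCMax b (cmax b w) := isCMax_cmax hcw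
    have hne : cmax b w ≠ w := fun h => hmw (h ▸ hCc)
    have hlt : w < cmax b w := lt_of_le_of_ne (le_cmax (reach_refl b w)) (Ne.symm hne)
    have hCcyc : Cyc b (cmax b w) := hCc.1
    have hCR : Reach b (cmax b w) w := (cyc_reach_back hcw (reach_cmax b w)).1
    have hreach := Fmap_reach_of_cmax_reach hb hCcyc hCc.cmax_eq hCR
    obtain ⟨t, htr⟩ := hreach
    cases t with
    | zero =>
      simp only [iterMap_zero, Option.some_inj] at htr
      exact hne (Fin.castSucc_injective m htr)
    | succ t =>
      have := hpred (cmax b w).castSucc (t+1) (by omega) htr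
      exact absurd (lt_trans hlt (by exact_mod_cast this)) (lt_irrefl _)
  · intro hw
    refine ⟨castSucc_ne_last w, Fmap_cyc_reach_last hb w hw.1, ?_⟩
    intro v k hk hv
    obtain ⟨v', rfl, hv'cyc, hv'le⟩ := Fmap_pred hb k v w hw.1 hv
    have h1 : v' ≤ w := le_trans (le_cmax (reach_refl b v')) (by rw [← hw.cmax_eq]; exact hv'le)
    rcases lt_or_eq_of_le h1 with h | h
    · exact_mod_cast Fin.castSucc_lt_castSucc_iff.mpr h
    · exfalso
      subst h
      exact Fmap_no_cyc hb v'.castSucc ⟨k, hk, hv⟩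

theorem maxAnc_Fmap (hb : IsPInj m b) {z : Fin m} (hz : Cyc b z) :
    maxAnc (Fmap b) z.castSucc = (cmax b z).castSucc := by
  apply le_antisymm
  · obtain ⟨k, hk⟩ := maxAnc_reach (Fmap b) z.castSucc
    obtain ⟨v', hv', hcv, hle⟩ := Fmap_pred hb k _ z hz hk
    rw [hv']
    have : v' ≤ cmax b z := le_trans (le_cmax (reach_refl b v')) hle
    exact_mod_cast Fin.castSucc_le_castSucc_iff.mpr this
  · apply le_maxAnc
    have hCc : IsCMax b (cmax b z) := isCMax_cmax hz
    exact Fmap_reach_of_cmax_reach hb hCc.1 hCc.cmax_eq (cyc_reach_back hz (reach_cmax b z)).1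

theorem Gmap_Fmap (hb : IsPInj m b) : ∀ z, Gmap (Fmap b) z = b z := by
  intro z
  rcases hbz : b z with _ | w
  · exact Gmap_none (Fmap_castSucc_none hbz)
  by_cases hmw : IsCMax b w
  · have ha : Fmap b z.castSucc = some (nextMax b w) := Fmap_castSucc_max hbz hmw
    have hcond : nextMax b w = Fin.last m ∨ Rec' (Fmap b) (nextMax b w) := by
      rw [nextMax]
      split
      · next hN =>
        right
        have hmin := Finset.min'_mem _ hN
        simp only [Finset.mem_filter, Finset.mem_univ, true_and] at hmin
        exact (rec'_Fmap_iff hb).mpr hmin.1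
      · exact Or.inl rfl
    rw [Gmap_end ha hcond]
    have hcz : Cyc b z := cyc_pred hb hbz hmw.1
    have hcmz : cmax b z = w := by
      rw [← cmax_congr hcz (reach_step hbz), hmw.cmax_eq]
    rw [maxAnc_Fmap hb hcz, hcmz, toFin_ne_last (castSucc_ne_last w), Fin.castPred_castSucc]
  · have ha : Fmap b z.castSucc = some w.castSucc := Fmap_castSucc_notmax hbz hmw
    have hcond : ¬ (w.castSucc = Fin.last m ∨ Rec' (Fmap b) w.castSucc) := by
      rintro (h | h)
      · exact castSucc_ne_last w h
      · exact hmw ((rec'_Fmap_iff hb).mp h)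
    rw [Gmap_mid ha hcond, toFin_ne_last (castSucc_ne_last w), Fin.castPred_castSucc]

end RT1
section RT2
variable {m : ℕ} {a : Fin (m+1) → Option (Fin (m+1))}

theorem E_forward (hlast : a (Fin.last m) = none) {x u : Fin (m+1)}
    (hE : Reach a x (Fin.last m)) (hxu : Reach a x u) : Reach a u (Fin.last m) := by
  obtain ⟨s, hs⟩ := hxu
  obtain ⟨k, hk⟩ := hE
  rcases le_or_gt s k with h | h
  · refine ⟨k - s, ?_⟩
    have : iterMap (m+1) a (s + (k - s)) x = some (Fin.last m) := by
      rwa [Nat.add_sub_cancel' h]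
    rw [iterMap_add, hs] at this
    simpa using this
  · exfalso
    have : iterMap (m+1) a (k + (s - k)) x = some u := by
      rwa [Nat.add_sub_cancel' (le_of_lt h)]
    rw [iterMap_add, hk] at this
    simp only [Option.bind_some] at this
    obtain ⟨d, hd⟩ : ∃ d, s - k = d + 1 := ⟨s - k - 1, by omega⟩
    rw [hd, iterMap_succ, hlast] at this
    simp at this

theorem E_comparable (ha : IsPInj (m+1) a) {x y : Fin (m+1)}
    (hx : Reach a x (Fin.last m)) (hy : Reach a y (Fin.last m)) :
    Reach a x y ∨ Reach a y x := by
  obtain ⟨s, hs⟩ := hx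
  obtain ⟨t, ht⟩ := hy
  rcases le_or_gt s t with h | h
  · right
    have h1 : iterMap (m+1) a ((t - s) + s) y = some (Fin.last m) := by
      rwa [Nat.sub_add_cancel h]
    obtain ⟨w, hw⟩ := iterMap_defined_prefix h1
    rw [iterMap_add, hw] at h1
    simp only [Option.bind_some] at h1
    have : w = x := iterMap_inj ha s h1 hs
    exact ⟨t - s, this ▸ hw⟩
  · left
    have h1 : iterMap (m+1) a ((s - t) + t) x = some (Fin.last m) := by
      rwa [Nat.sub_add_cancel (le_of_lt h)]
    obtain ⟨w, hw⟩ := iterMap_defined_prefix h1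
    rw [iterMap_add, hw] at h1
    simp only [Option.bind_some] at h1
    have : w = y := iterMap_inj ha t h1 ht
    exact ⟨s - t, this ▸ hw⟩

theorem pred_reach (ha : IsPInj (m+1) a) {x₀ u x : Fin (m+1)} (h0 : a x₀ = some u)
    (h : Reach a x u) : x = u ∨ Reach a x x₀ := by
  obtain ⟨k, hk⟩ := h
  cases k with
  | zero => left; simpa [iterMap] using hk
  | succ k =>
    right
    rw [iterMap_succ'] at hk
    rcases hp : iterMap (m+1) a k x with _ | p
    · rw [hp] at hk; simp at hk
    rw [hp] at hk; simp only [Option.bind_some] at hk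
    have : p = x₀ := ha p x₀ u hk h0
    exact ⟨k, this ▸ hp⟩

theorem maxAnc_rec_self (hnc : ∀ x, ¬ Cyc a x) {x : Fin (m+1)} (hr : Rec' a x) :
    maxAnc a x = x := by
  apply le_antisymm
  · obtain ⟨k, hk⟩ := maxAnc_reach a x
    cases k with
    | zero => exact le_of_eq (by simpa [iterMap] using hk)
    | succ k => exact le_of_lt (hr.2.2 _ (k+1) (by omega) hk)
  · exact le_maxAnc (reach_refl a x)

theorem maxAnc_step_eq (ha : IsPInj (m+1) a) (hlast : a (Fin.last m) = none)
    (hnc : ∀ x, ¬ Cyc a x) {x u : Fin (m+1)} (hxu : a x = some u) (hul : u ≠ Fin.last m)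
    (hEu : Reach a u (Fin.last m)) (hru : ¬ Rec' a u) : maxAnc a u = maxAnc a x := by
  apply le_antisymm
  · have hrec : Rec' a (maxAnc a u) := rec'_maxAnc hlast hnc hul hEu
    rcases pred_reach ha hxu (maxAnc_reach a u) with h | h
    · exact absurd (h ▸ hrec) hru
    · exact le_maxAnc h
  · exact le_maxAnc (reach_trans (maxAnc_reach a x) (reach_step hxu))

theorem nonE_transport (ha : IsPInj (m+1) a) :
    ∀ (k : ℕ) (z : Fin m), ¬ Reach a z.castSucc (Fin.last m) →
    Option.map Fin.castSucc (iterMap m (Gmap a) k z) = iterMap (m+1) a k z.castSucc := by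
  intro k
  induction k with
  | zero => intro z _; rfl
  | succ k ih =>
    intro z hz
    rcases haz : a z.castSucc with _ | u
    · rw [iterMap_succ, iterMap_succ, Gmap_none haz, haz]; rfl
    have hul : u ≠ Fin.last m := by
      rintro rfl; exact hz (reach_step haz)
    have hEu : ¬ Reach a u (Fin.last m) := fun h => hz (reach_trans (reach_step haz) h)
    have hru : ¬ Rec' a u := fun h => hEu h.2.1
    have hcast : (u.castPred hul).castSucc = u := Fin.castSucc_castPred u hul
    rw [iterMap_succ, iterMap_succ, Gmap_mid haz (by rintro (h | h); exacts [hul h, hru h]),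
      toFin_ne_last hul, haz]
    simp only [Option.bind_some]
    have hres := ih (u.castPred hul) (by rwa [hcast])
    rwa [hcast] at hres

theorem cyc_Gmap_E (ha : IsPInj (m+1) a) (hnc : ∀ x, ¬ Cyc a x) {z : Fin m}
    (h : Cyc (Gmap a) z) : Reach a z.castSucc (Fin.last m) := by
  by_contra hE
  obtain ⟨k, hk, hkz⟩ := h
  have := nonE_transport ha k z hE
  rw [hkz] at this
  exact hnc z.castSucc ⟨k, hk, this.symm⟩

theorem Gmap_transport_path (ha : IsPInj (m+1) a) (hlast : a (Fin.last m) = none) :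
    ∀ (s : ℕ) (x : Fin (m+1)) (z : Fin m), iterMap (m+1) a s x = some z.castSucc →
    (∀ i y, 0 < i → i ≤ s → iterMap (m+1) a i x = some y → ¬ Rec' a y) →
    ∀ (x' : Fin m), x = x'.castSucc → iterMap m (Gmap a) s x' = some z := by
  intro s
  induction s with
  | zero =>
    intro x z hx _ x' hxx'
    subst hxx'
    simp only [iterMap_zero, Option.some_inj] at hx ⊢
    exact Fin.castSucc_injective m hx
  | succ s ih =>
    intro x z hx hrec x' hxx'
    subst hxx'
    rw [iterMap_succ] at hx
    rcases hy : a x'.castSucc with _ | y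
    · rw [hy] at hx; simp at hx
    rw [hy] at hx; simp only [Option.bind_some] at hx
    have hyl : y ≠ Fin.last m := by
      rintro rfl
      exact castSucc_ne_last z (reach_last_eq hlast ⟨s, hx⟩)
    have hyr : ¬ Rec' a y := hrec 1 y (by omega) (by omega) (by rwa [iterMap_one])
    rw [iterMap_succ, Gmap_mid hy (by rintro (h | h); exacts [hyl h, hyr h])]
    simp only [Option.bind_some]
    rw [toFin_ne_last hyl]
    refine ih y z hx ?_ (y.castPred hyl) (Fin.castSucc_castPred y hyl).symm
    intro i y₂ hi his hiy
    refine hrec (i+1) y₂ (by omega) (by omega) ?_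
    rw [show i + 1 = 1 + i by omega, iterMap_add, iterMap_one, hy]
    simpa using hiy

/-- from the maximal ancestor one can walk down to the point inside `Gmap` -/
theorem maxAnc_walk_down (ha : IsPInj (m+1) a) (hlast : a (Fin.last m) = none)
    (hnc : ∀ x, ¬ Cyc a x) (z : Fin m) :
    ∀ (s : ℕ), iterMap (m+1) a s (maxAnc a z.castSucc) = some z.castSucc →
    iterMap m (Gmap a) s ((maxAnc a z.castSucc).castPred
      (maxAnc_ne_last hlast (castSucc_ne_last z))) = some z := by
  intro s hs
  apply Gmap_transport_path ha hlast s (maxAnc a z.castSucc) z hs _ _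
    (Fin.castSucc_castPred _ _).symm
  intro i y hi his hiy
  intro hry
  have h1 : maxAnc a z.castSucc < y := hry.2.2 _ i hi hiy
  have h2 : y ≤ maxAnc a z.castSucc := by
    apply le_maxAnc
    refine ⟨s - i, ?_⟩
    have : iterMap (m+1) a (i + (s - i)) (maxAnc a z.castSucc) = some z.castSucc := by
      rwa [Nat.add_sub_cancel' his]
    rw [iterMap_add, hiy] at this
    simpa using this
  exact absurd (lt_of_lt_of_le h1 h2) (lt_irrefl _)

theorem E_cyc (ha : IsPInj (m+1) a) (hlast : a (Fin.last m) = none)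
    (hnc : ∀ x, ¬ Cyc a x) :
    ∀ (k : ℕ) (z : Fin m), iterMap (m+1) a k z.castSucc = some (Fin.last m) →
    Cyc (Gmap a) z := by
  intro k
  induction k with
  | zero =>
    intro z hz
    exact absurd (by simpa [iterMap] using hz) (castSucc_ne_last z)
  | succ k ih =>
    intro z hz
    rw [iterMap_succ] at hz
    rcases hu : a z.castSucc with _ | u
    · rw [hu] at hz; simp at hz
    rw [hu] at hz; simp only [Option.bind_some] at hz
    by_cases hcond : u = Fin.last m ∨ Rec' a u
    · -- block end: jump back to block start, then walk down
      have hEz : Reach a z.castSucc (Fin.last m) := by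
        rcases hcond with rfl | hr
        · exact reach_step hu
        · exact reach_trans (reach_step hu) hr.2.1
      have hMl : maxAnc a z.castSucc ≠ Fin.last m := maxAnc_ne_last hlast (castSucc_ne_last z)
      obtain ⟨s, hs⟩ := maxAnc_reach a z.castSucc
      have hwalk := maxAnc_walk_down ha hlast hnc z s hs
      have hGz : Gmap a z = some ((maxAnc a z.castSucc).castPred hMl) := by
        rw [Gmap_end hu hcond, toFin_ne_last hMl]
      refine ⟨1 + s, by omega, ?_⟩
      rw [iterMap_add, iterMap_one, hGz]
      simpa using hwalk
    · have hul : u ≠ Fin.last m := fun h => hcond (Or.inl h)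
      have hk0 : k ≠ 0 := by
        rintro rfl
        exact hul (by simpa [iterMap] using hz)
      obtain ⟨k', rfl⟩ : ∃ k', k = k' + 1 := ⟨k - 1, by omega⟩
      have hGz : Gmap a z = some (u.castPred hul) := by
        rw [Gmap_mid hu hcond, toFin_ne_last hul]
      have hcyc' : Cyc (Gmap a) (u.castPred hul) := by
        apply ih
        rwa [Fin.castSucc_castPred]
      exact cyc_pred (Gmap_isPInj ha hlast hnc) hGz hcyc'

theorem reach_blockstart (ha : IsPInj (m+1) a) (hlast : a (Fin.last m) = none)
    (hnc : ∀ x, ¬ Cyc a x) :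
    ∀ (k : ℕ) (z : Fin m), iterMap (m+1) a k z.castSucc = some (Fin.last m) →
    ∃ W : Fin m, W.castSucc = maxAnc a z.castSucc ∧ Reach (Gmap a) z W := by
  intro k
  induction k with
  | zero =>
    intro z hz
    exact absurd (by simpa [iterMap] using hz) (castSucc_ne_last z)
  | succ k ih =>
    intro z hz
    rw [iterMap_succ] at hz
    rcases hu : a z.castSucc with _ | u
    · rw [hu] at hz; simp at hz
    rw [hu] at hz; simp only [Option.bind_some] at hz
    by_cases hcond : u = Fin.last m ∨ Rec' a u
    · have hMl : maxAnc a z.castSucc ≠ Fin.last m := maxAnc_ne_last hlast (castSucc_ne_last z)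
      refine ⟨(maxAnc a z.castSucc).castPred hMl, Fin.castSucc_castPred _ _, ?_⟩
      exact reach_step (by rw [Gmap_end hu hcond, toFin_ne_last hMl])
    · have hul : u ≠ Fin.last m := fun h => hcond (Or.inl h)
      have hur : ¬ Rec' a u := fun h => hcond (Or.inr h)
      have hk0 : k ≠ 0 := by
        rintro rfl
        exact hul (by simpa [iterMap] using hz)
      have hcast : (u.castPred hul).castSucc = u := Fin.castSucc_castPred u hul
      obtain ⟨W, hW, hr⟩ := ih (u.castPred hul) (by rwa [hcast])
      have hMeq : maxAnc a u = maxAnc a z.castSucc :=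
        maxAnc_step_eq ha hlast hnc hu hul ⟨k, hz⟩ hur
      refine ⟨W, by rw [hW, hcast, hMeq], ?_⟩
      have hGz : Gmap a z = some (u.castPred hul) := by
        rw [Gmap_mid hu hcond, toFin_ne_last hul]
      exact reach_trans (reach_step hGz) hr

theorem desc_invariant (ha : IsPInj (m+1) a) (hlast : a (Fin.last m) = none)
    (hnc : ∀ x, ¬ Cyc a x) {w : Fin m} (hw : Rec' a w.castSucc) :
    ∀ (t : ℕ) (v : Fin m), iterMap m (Gmap a) t w = some v →
    Reach a w.castSucc v.castSucc ∧ maxAnc a v.castSucc = w.castSucc ∧ v ≤ w := by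
  intro t
  induction t with
  | zero =>
    intro v hv
    simp only [iterMap_zero, Option.some_inj] at hv
    subst hv
    exact ⟨reach_refl a _, maxAnc_rec_self hnc hw, le_rfl⟩
  | succ t ih =>
    intro v hv
    rw [iterMap_succ'] at hv
    rcases hv₀ : iterMap m (Gmap a) t w with _ | v₀
    · rw [hv₀] at hv; simp at hv
    rw [hv₀] at hv; simp only [Option.bind_some] at hv
    obtain ⟨hRv₀, hMv₀, hlev₀⟩ := ih v₀ hv₀
    rcases hu : a v₀.castSucc with _ | u
    · rw [Gmap_none hu] at hv; simp at hv
    by_cases hcond : u = Fin.last m ∨ Rec' a u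
    · rw [Gmap_end hu hcond] at hv
      rw [hMv₀, toFin_ne_last (castSucc_ne_last w), Fin.castPred_castSucc] at hv
      have : v = w := (Option.some_inj.mp hv).symm
      subst this
      exact ⟨reach_refl a _, maxAnc_rec_self hnc hw, le_rfl⟩
    · have hul : u ≠ Fin.last m := fun h => hcond (Or.inl h)
      have hur : ¬ Rec' a u := fun h => hcond (Or.inr h)
      rw [Gmap_mid hu hcond, toFin_ne_last hul] at hv
      have hveq : v.castSucc = u := by
        rw [← Option.some_inj.mp hv, Fin.castSucc_castPred]
      have hRwu : Reach a w.castSucc u := reach_trans hRv₀ (reach_step hu)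
      have hEu : Reach a u (Fin.last m) :=
        E_forward hlast hw.2.1 hRwu
      have hM : maxAnc a u = w.castSucc := by
        rw [maxAnc_step_eq ha hlast hnc hu hul hEu hur, hMv₀]
      refine ⟨hveq ▸ hRwu, hveq ▸ hM, ?_⟩
      have : u ≤ maxAnc a u := le_maxAnc (reach_refl a u)
      rw [hM, ← hveq] at this
      exact_mod_cast this
  
theorem isCMax_Gmap_iff (ha : IsPInj (m+1) a) (hlast : a (Fin.last m) = none)
    (hnc : ∀ x, ¬ Cyc a x) {w : Fin m} :
    IsCMax (Gmap a) w ↔ Rec' a w.castSucc := by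
  constructor
  · rintro ⟨hcyc, hmax⟩
    have hE : Reach a w.castSucc (Fin.last m) := cyc_Gmap_E ha hnc hcyc
    obtain ⟨k, hk⟩ := hE
    obtain ⟨W, hWc, hr⟩ := reach_blockstart ha hlast hnc k w hk
    have h1 : W ≤ w := hmax W hr
    have h2 : w.castSucc ≤ maxAnc a w.castSucc := le_maxAnc (reach_refl a _)
    rw [← hWc] at h2
    have h3 : w = W := le_antisymm (by exact_mod_cast h2) h1
    have h4 : maxAnc a w.castSucc = w.castSucc := by rw [← hWc, h3]
    rw [← h4]
    exact rec'_maxAnc hlast hnc (castSucc_ne_last w) ⟨k, hk⟩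
  · intro hr
    obtain ⟨k, hk⟩ := hr.2.1
    refine ⟨E_cyc ha hlast hnc k w hk, ?_⟩
    intro v hv
    obtain ⟨t, ht⟩ := hv
    exact (desc_invariant ha hlast hnc hr t v ht).2.2

theorem nextMax_Gmap (ha : IsPInj (m+1) a) (hlast : a (Fin.last m) = none)
    (hnc : ∀ x, ¬ Cyc a x) {z : Fin m} {u : Fin (m+1)} (hu : a z.castSucc = some u)
    (hcond : u = Fin.last m ∨ Rec' a u) :
    nextMax (Gmap a) ((maxAnc a z.castSucc).castPred
      (maxAnc_ne_last hlast (castSucc_ne_last z))) = u := by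
  set W := maxAnc a z.castSucc with hW
  set W' := W.castPred (maxAnc_ne_last hlast (castSucc_ne_last z)) with hW'
  have hWc : W'.castSucc = W := Fin.castSucc_castPred _ _
  have hEz : Reach a z.castSucc (Fin.last m) := by
    rcases hcond with rfl | hr
    · exact reach_step hu
    · exact reach_trans (reach_step hu) hr.2.1
  -- the set of candidates
  have hset : ∀ M : Fin m, (IsCMax (Gmap a) M ∧ W' < M) ↔ (Rec' a M.castSucc ∧ W' < M) := by
    intro M
    rw [isCMax_Gmap_iff ha hlast hnc]
  rcases hcond with rfl | hr
  · -- u = last : no record lies strictly above W'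
    have hempty : ¬ (Finset.univ.filter (fun M => IsCMax (Gmap a) M ∧ W' < M)).Nonempty := by
      rintro ⟨M, hM⟩
      simp only [Finset.mem_filter, Finset.mem_univ, true_and] at hM
      rw [hset M] at hM
      -- M is a record; its chain to last passes through z (unique pred of last)
      have hRM : Reach a M.castSucc (Fin.last m) := hM.1.2.1
      have hMz : Reach a M.castSucc z.castSucc := by
        obtain ⟨k, hk⟩ := hRM
        cases k with
        | zero => exact absurd (by simpa [iterMap] using hk) (castSucc_ne_last M)
        | succ k =>
          rw [iterMap_succ'] at hk
          rcases hp : iterMap (m+1) a k M.castSucc with _ | p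
          · rw [hp] at hk; simp at hk
          rw [hp] at hk; simp only [Option.bind_some] at hk
          have : p = z.castSucc := ha p z.castSucc (Fin.last m) hk hu
          exact ⟨k, this ▸ hp⟩
      have h1 : M.castSucc ≤ W := le_maxAnc hMz
      rw [← hWc] at h1
      have : M ≤ W' := by exact_mod_cast h1
      exact absurd (lt_of_lt_of_le hM.2 this) (lt_irrefl _)
    rw [nextMax, dif_neg hempty]
  · -- u is a record
    have hul : u ≠ Fin.last m := hr.1
    obtain ⟨u', rfl⟩ : ∃ u', u = u'.castSucc := ⟨u.castPred hul, by simp⟩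
    have hmemu : IsCMax (Gmap a) u' ∧ W' < u' := by
      rw [hset]
      refine ⟨hr, ?_⟩
      -- W < u since W is a (strict) predecessor of u
      obtain ⟨s, hs⟩ := maxAnc_reach a z.castSucc
      have hpredu : iterMap (m+1) a (s+1) W = some u'.castSucc := by
        rw [iterMap_succ', hs]; simpa using hu
      have h1 : W < u'.castSucc := hr.2.2 W (s+1) (by omega) hpredu
      rw [← hWc] at h1
      exact_mod_cast h1
    have hN : (Finset.univ.filter (fun M => IsCMax (Gmap a) M ∧ W' < M)).Nonempty :=
      ⟨u', by simp only [Finset.mem_filter, Finset.mem_univ, true_and]; exact hmemu⟩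
    rw [nextMax, dif_pos hN]
    congr 1
    apply le_antisymm
    · exact Finset.min'_le _ _ (by
        simp only [Finset.mem_filter, Finset.mem_univ, true_and]; exact hmemu)
    · apply Finset.le_min'
      intro M hM
      simp only [Finset.mem_filter, Finset.mem_univ, true_and] at hM
      rw [hset M] at hM
      -- u' ≤ M for any record M above W'
      by_contra hMu
      push_neg at hMu
      -- M < u'; M does not reach z (else M ≤ W'), so z reaches M
      have hnMz : ¬ Reach a M.castSucc z.castSucc := by
        intro hrz
        have h1 : M.castSucc ≤ W := le_maxAnc hrz
        rw [← hWc] at h1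
        have : M ≤ W' := by exact_mod_cast h1
        exact absurd (lt_of_lt_of_le hM.2 this) (lt_irrefl _)
      have hcomp := E_comparable ha hEz hM.1.2.1
      rcases hcomp with hzM | hMz
      · -- z reaches M: first step is u; so u = M or u strict pred of M
        obtain ⟨k, hk⟩ := hzM
        cases k with
        | zero =>
          have : z.castSucc = M.castSucc := by simpa [iterMap] using hk
          exact hnMz (this ▸ reach_refl a _)
        | succ k =>
          rw [iterMap_succ, hu] at hk
          simp only [Option.bind_some] at hk
          cases k with
          | zero =>
            have : u'.castSucc = M.castSucc := by simpa [iterMap] using hk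
            have : u' = M := Fin.castSucc_injective m this
            omega
          | succ k =>
            have := hM.1.2.2 u'.castSucc (k+1) (by omega) hk
            have h2 : u' < M := by exact_mod_cast this
            omega
      · exact hnMz hMz

theorem Fmap_Gmap (ha : IsPInj (m+1) a) (hlast : a (Fin.last m) = none)
    (hnc : ∀ x, ¬ Cyc a x) : ∀ x, Fmap (Gmap a) x = a x := by
  intro x
  by_cases hxl : x = Fin.last m
  · rw [hxl, Fmap_last, hlast]
  obtain ⟨z, rfl⟩ : ∃ z, x = z.castSucc := ⟨x.castPred hxl, by simp⟩
  rcases hu : a z.castSucc with _ | u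
  · rw [Fmap_castSucc_none (Gmap_none hu)]
  by_cases hcond : u = Fin.last m ∨ Rec' a u
  · have hMl : maxAnc a z.castSucc ≠ Fin.last m := maxAnc_ne_last hlast (castSucc_ne_last z)
    have hEz : Reach a z.castSucc (Fin.last m) := by
      rcases hcond with rfl | hr
      · exact reach_step hu
      · exact reach_trans (reach_step hu) hr.2.1
    have hGz : Gmap a z = some ((maxAnc a z.castSucc).castPred hMl) := by
      rw [Gmap_end hu hcond, toFin_ne_last hMl]
    have hrecW : Rec' a ((maxAnc a z.castSucc).castPred hMl).castSucc := by
      rw [Fin.castSucc_castPred]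
      exact rec'_maxAnc hlast hnc (castSucc_ne_last z) hEz
    have hmaxW : IsCMax (Gmap a) ((maxAnc a z.castSucc).castPred hMl) :=
      (isCMax_Gmap_iff ha hlast hnc).mpr hrecW
    rw [Fmap_castSucc_max hGz hmaxW, nextMax_Gmap ha hlast hnc hu hcond]
  · have hul : u ≠ Fin.last m := fun h => hcond (Or.inl h)
    have hur : ¬ Rec' a u := fun h => hcond (Or.inr h)
    have hGz : Gmap a z = some (u.castPred hul) := by
      rw [Gmap_mid hu hcond, toFin_ne_last hul]
    have hnm : ¬ IsCMax (Gmap a) (u.castPred hul) := by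
      rw [isCMax_Gmap_iff ha hlast hnc, Fin.castSucc_castPred]
      exact hur
    rw [Fmap_castSucc_notmax hGz hnm, Fin.castSucc_castPred]

end RT2

section Final

noncomputable def DEquiv (m : ℕ) :
    {α : PInj (m+1) // Nilpotent (m+1) α ∧ α.val (Fin.last m) = none} ≃ PInj m where
  toFun α := ⟨Gmap α.1.val,
    Gmap_isPInj α.1.2 α.2.2 ((nilpotent_iff_no_cyc α.1).mp α.2.1)⟩
  invFun b := ⟨⟨Fmap b.val, Fmap_isPInj b.2⟩, Fmap_nilpotent b.2, Fmap_last b.val⟩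
  left_inv := by
    intro α
    apply Subtype.ext
    apply Subtype.ext
    funext x
    exact Fmap_Gmap α.1.2 α.2.2 ((nilpotent_iff_no_cyc α.1).mp α.2.1) x
  right_inv := by
    intro b
    apply Subtype.ext
    funext z
    exact Gmap_Fmap b.2 z

theorem card_D (m : ℕ) :
    (Finset.univ.filter (fun α : PInj (m+1) =>
        Nilpotent (m+1) α ∧ α.val (Fin.last m) = none)).card
      = Fintype.card (PInj m) := by
  rw [← Fintype.card_subtype]
  exact Fintype.card_congr (DEquiv m)

section Conj
variable {N : ℕ}

noncomputable def conjP (σ : Equiv.Perm (Fin N)) (α : PInj N) : PInj N :=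
  ⟨fun v => (α.val (σ v)).map σ, by
    intro p q c h1 h2
    rw [Option.map_eq_some_iff] at h1 h2
    obtain ⟨cp, hcp, hcp2⟩ := h1
    obtain ⟨cq, hcq, hcq2⟩ := h2
    have : cp = cq := σ.injective (hcp2.trans hcq2.symm)
    subst this
    exact σ.injective (α.2 _ _ _ hcp hcq)⟩

theorem conjP_iter (σ : Equiv.Perm (Fin N)) (α : PInj N) (hσ : ∀ v, σ (σ v) = v) :
    ∀ (k : ℕ) (v : Fin N),
    iterMap N (conjP σ α).val k v = (iterMap N α.val k (σ v)).map σ := by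
  intro k
  induction k with
  | zero => intro v; simp [iterMap, hσ]
  | succ k ih =>
    intro v
    rw [iterMap_succ, iterMap_succ]
    show ((α.val (σ v)).map σ).bind _ = _
    rcases h : α.val (σ v) with _ | w
    · rfl
    · simp only [Option.map_some, Option.bind_some]
      rw [ih (σ w), hσ]

theorem conjP_conjP (σ : Equiv.Perm (Fin N)) (hσ : ∀ v, σ (σ v) = v) (α : PInj N) :
    conjP σ (conjP σ α) = α := by
  apply Subtype.ext
  funext v
  show ((α.val (σ (σ v))).map σ).map σ = α.val v
  rw [hσ]
  rcases h : α.val v with _ | w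
  · rfl
  · simp [hσ]

theorem conjP_nilp (σ : Equiv.Perm (Fin N)) (hσ : ∀ v, σ (σ v) = v) (α : PInj N)
    (h : Nilpotent N α) : Nilpotent N (conjP σ α) := by
  obtain ⟨k, hk, hkn⟩ := h
  exact ⟨k, hk, fun v => by rw [conjP_iter σ α hσ k v, hkn]; rfl⟩

theorem card_nilp_none_eq (x y : Fin N) :
    (Finset.univ.filter (fun α : PInj N => Nilpotent N α ∧ α.val x = none)).card
      = (Finset.univ.filter (fun α : PInj N => Nilpotent N α ∧ α.val y = none)).card := by
  set σ := Equiv.swap x y with hσdef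
  have hσ : ∀ v, σ (σ v) = v := fun v => Equiv.swap_apply_self x y v
  have hσx : σ y = x := Equiv.swap_apply_right x y
  have hσy : σ x = y := Equiv.swap_apply_left x y
  have key : ∀ (p q : Fin N), σ p = q → ∀ α : PInj N,
      (Nilpotent N α ∧ α.val p = none) → (Nilpotent N (conjP σ α) ∧ (conjP σ α).val q = none) := by
    intro p q hpq α ⟨h1, h2⟩
    refine ⟨conjP_nilp σ hσ α h1, ?_⟩
    show (α.val (σ q)).map σ = none
    rw [← hpq, hσ, h2]
    rfl
  apply Finset.card_nbij' (i := fun α => conjP σ α) (j := fun α => conjP σ α)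
  · intro α hα
    simp only [Finset.coe_filter, Set.mem_setOf_eq, Finset.mem_filter, Finset.mem_univ, true_and] at hα ⊢
    exact key x y hσy α hα
  · intro α hα
    simp only [Finset.coe_filter, Set.mem_setOf_eq, Finset.mem_filter, Finset.mem_univ, true_and] at hα ⊢
    exact key y x hσx α hα
  · intro α _
    exact conjP_conjP σ hσ α
  · intro α _
    exact conjP_conjP σ hσ α

end Conj

end Final

open scoped Classical in
theorem stmt16 (n : ℕ) :
    (n + 1) * Nat.card (PInj n)
      = ∑ α : PInj (n + 1),
          if Nilpotent (n + 1) α then (n + 1) - domCard (n + 1) α else 0 := by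
  have step1 : ∀ α : PInj (n+1),
      (n + 1) - domCard (n+1) α
        = (Finset.univ.filter (fun x : Fin (n+1) => α.val x = none)).card := by
    intro α
    have h1 := Finset.card_filter_add_card_filter_not
      (s := (Finset.univ : Finset (Fin (n+1)))) (p := fun x => α.val x ≠ none)
    rw [domCard]
    have h2 : (Finset.univ.filter (fun x : Fin (n+1) => ¬ α.val x ≠ none)).card
        = (Finset.univ.filter (fun x : Fin (n+1) => α.val x = none)).card := by
      congr 1
      apply Finset.filter_congr
      intro x _
      simp
    rw [← h2]
    simp only [Finset.card_univ, Fintype.card_fin] at h1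
    omega
  calc (n + 1) * Nat.card (PInj n)
      = ∑ _x : Fin (n+1), Nat.card (PInj n) := by
        rw [Finset.sum_const, Finset.card_univ, Fintype.card_fin, smul_eq_mul]
    _ = ∑ x : Fin (n+1),
          (Finset.univ.filter (fun α : PInj (n+1) =>
            Nilpotent (n+1) α ∧ α.val x = none)).card := by
        apply Finset.sum_congr rfl
        intro x _
        rw [card_nilp_none_eq x (Fin.last n), card_D, Nat.card_eq_fintype_card]
    _ = ∑ x : Fin (n+1), ∑ α : PInj (n+1),
          if Nilpotent (n+1) α ∧ α.val x = none then 1 else 0 := by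
        apply Finset.sum_congr rfl
        intro x _
        rw [Finset.card_filter]
    _ = ∑ α : PInj (n+1), ∑ x : Fin (n+1),
          if Nilpotent (n+1) α ∧ α.val x = none then 1 else 0 := Finset.sum_comm
    _ = ∑ α : PInj (n + 1),
          if Nilpotent (n + 1) α then (n + 1) - domCard (n + 1) α else 0 := by
        apply Finset.sum_congr rfl
        intro α _
        rw [step1 α, Finset.card_filter]
        by_cases hN : Nilpotent (n+1) α
        · simp [hN]
        · simp [hN]
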